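/- Let p be a prime with p ≡ 1 (mod 6). Then v_p of the rational number (1/k!)·C(k,j)·(5/6 − j)_{n+k+1}/(2/3 − j)_{k+1} equals ∑_{ℓ≥1} ( −⌊j/p^ℓ⌋ − ⌊(k−j)/p^ℓ⌋ + ⌊(n+k−j+(p^ℓ+5)/6)/p^ℓ⌋ − ⌊(−j+(p^ℓ−1)/6)/p^ℓ⌋ − ⌊(k−j+(p^ℓ+2)/3)/p^ℓ⌋ + ⌊(−j+(p^ℓ−1)/3)/p^ℓ⌋ ), for all nonnegative integers n, k, j with j ≤ k. -/

import Mathlib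

open Polynomial Finset

-- auxiliary lemmas
lemma aux_ediv_step (q x : ℤ) (hq : 0 < q) :
    x / q - (x - 1) / q = if q ∣ x then 1 else 0 := by
  by_cases h : q ∣ x
  · obtain ⟨t, rfl⟩ := h
    rw [if_pos ⟨t, rfl⟩]
    have h1 : q * t / q = t := Int.mul_ediv_cancel_left t hq.ne'
    have h2 : (q * t - 1) / q = t - 1 := by
      have e : q * t - 1 = (q - 1) + q * (t - 1) := by ring
      rw [e, Int.add_mul_ediv_left _ _ hq.ne', Int.ediv_eq_zero_of_lt (by omega) (by omega)]
      ring
    rw [h1, h2]; ring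
  · rw [if_neg h]
    have hr0 : 0 ≤ x % q := Int.emod_nonneg x hq.ne'
    have hrne : x % q ≠ 0 := fun h0 => h (Int.dvd_of_emod_eq_zero h0)
    have hrq : x % q < q := Int.emod_lt_of_pos x hq
    have hx := Int.mul_ediv_add_emod x q
    have h2 : (x - 1) / q = x / q := by
      have e : x - 1 = (x % q - 1) + q * (x / q) := by omega
      rw [e, Int.add_mul_ediv_left _ _ hq.ne', Int.ediv_eq_zero_of_lt (by omega) (by omega),
        zero_add]
    rw [h2]; ring

lemma aux_count (q : ℤ) (hq : 0 < q) (c : ℤ) (m : ℕ) :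
    (((range m).filter (fun i : ℕ => q ∣ ((i : ℤ) - c))).card : ℤ)
      = ((m : ℤ) - 1 - c) / q - (-1 - c) / q := by
  induction m with
  | zero => simp
  | succ m ih =>
    rw [range_add_one, filter_insert]
    have step := aux_ediv_step q ((m : ℤ) - c) hq
    have e : (m : ℤ) - c - 1 = (m : ℤ) - 1 - c := by ring
    rw [e] at step
    have e2 : ((m : ℕ) + 1 : ℤ) - 1 - c = (m : ℤ) - c := by push_cast; ring
    by_cases h : q ∣ ((m : ℤ) - c)
    · rw [if_pos h, card_insert_of_notMem (by simp)]
      rw [if_pos h] at step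
      push_cast
      rw [show ((m : ℤ) + 1 - 1 - c) = (m : ℤ) - c from by ring]
      omega
    · rw [if_neg h]
      rw [if_neg h] at step
      push_cast
      rw [show ((m : ℤ) + 1 - 1 - c) = (m : ℤ) - c from by ring]
      omega

lemma aux_val_le {p : ℕ} (hp : p.Prime) {x : ℤ} (hx : x ≠ 0) :
    padicValInt p x ≤ x.natAbs := by
  have hd : (p : ℤ) ^ padicValInt p x ∣ x := by
    haveI : Fact p.Prime := ⟨hp⟩
    exact padicValInt_dvd x
  have hd' : p ^ padicValInt p x ∣ x.natAbs := by
    rwa [Int.natCast_dvd_natCast.symm, Int.natCast_pow, Int.dvd_natAbs] at *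
    
  have hle : p ^ padicValInt p x ≤ x.natAbs :=
    Nat.le_of_dvd (Int.natAbs_pos.mpr hx) hd'
  calc padicValInt p x ≤ p ^ padicValInt p x := Nat.le_of_lt (Nat.lt_pow_self hp.one_lt)
    _ ≤ x.natAbs := hle

lemma aux_val_sum {p : ℕ} (hp : p.Prime) {x : ℤ} (hx : x ≠ 0) {M : ℕ}
    (hM : padicValInt p x ≤ M) :
    ((padicValInt p x : ℤ)) = ∑ ℓ ∈ Icc 1 M, (if (p : ℤ) ^ ℓ ∣ x then (1 : ℤ) else 0) := by
  haveI : Fact p.Prime := ⟨hp⟩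
  have hiff : ∀ ℓ : ℕ, ((p : ℤ) ^ ℓ ∣ x ↔ ℓ ≤ padicValInt p x) := by
    intro ℓ
    rw [padicValInt_dvd_iff]
    simp [hx]
  have h1 : (∑ ℓ ∈ Icc 1 M, (if (p : ℤ) ^ ℓ ∣ x then (1 : ℤ) else 0))
      = ∑ ℓ ∈ Icc 1 M, (if ℓ ≤ padicValInt p x then (1 : ℤ) else 0) :=
    Finset.sum_congr rfl (fun ℓ _ => by rw [if_congr (hiff ℓ) rfl rfl])
  rw [h1, Finset.sum_ite, Finset.sum_const, Finset.sum_const]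
  have h2 : (Icc 1 M).filter (fun ℓ => ℓ ≤ padicValInt p x) = Icc 1 (padicValInt p x) := by
    ext a; simp only [mem_filter, mem_Icc]; omega
  rw [h2]
  simp

lemma aux_asc_prod (m : ℕ) (x : ℚ) :
    (ascPochhammer ℚ m).eval x = ∏ i ∈ range m, (x + i) := by
  induction m with
  | zero => simp
  | succ m ih =>
    rw [ascPochhammer_succ_right, eval_mul, ih, prod_range_succ]
    simp

lemma aux_val_prod {p : ℕ} (hp : p.Prime) {ι : Type*} (s : Finset ι) (f : ι → ℚ)
    (hf : ∀ i ∈ s, f i ≠ 0) :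
    padicValRat p (∏ i ∈ s, f i) = ∑ i ∈ s, padicValRat p (f i) := by
  haveI : Fact p.Prime := ⟨hp⟩
  classical
  induction s using Finset.induction with
  | empty => simp
  | @insert a s hni ih =>
    rw [prod_insert hni, sum_insert hni,
      padicValRat.mul (hf a (mem_insert_self a s))
        (prod_ne_zero_iff.mpr fun i hi => hf i (mem_insert_of_mem hi)),
      ih (fun i hi => hf i (mem_insert_of_mem hi))]
lemma aux_count_mod (q : ℕ) (hq : 0 < q) (d r : ℕ) (hco : IsCoprime (q : ℤ) (d : ℤ))
    (j s m : ℕ) (hs : d * s = q + r) :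
    ∑ i ∈ range m, (if (q : ℤ) ∣ ((d : ℤ) * i - d * j + r) then (1 : ℤ) else 0)
      = ((m : ℤ) - 1 - j + s) / q - (-1 - (j : ℤ) + s) / q := by
  have key : ∀ i : ℕ, ((q : ℤ) ∣ (d : ℤ) * i - d * j + r ↔ (q : ℤ) ∣ (i : ℤ) - ((j : ℤ) - s)) := by
    intro i
    have hs' : (d : ℤ) * s = q + r := by exact_mod_cast congrArg (Nat.cast : ℕ → ℤ) hs
    have e : (d : ℤ) * ((i : ℤ) - ((j : ℤ) - s)) = ((d : ℤ) * i - d * j + r) + q := by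
      linear_combination hs'
    constructor
    · intro h
      have h6 : (q : ℤ) ∣ (d : ℤ) * ((i : ℤ) - ((j : ℤ) - s)) := by
        rw [e]; exact dvd_add h dvd_rfl
      exact hco.dvd_of_dvd_mul_left h6
    · intro h
      have e2 : (d : ℤ) * i - d * j + r = (d : ℤ) * ((i : ℤ) - ((j : ℤ) - s)) - q := by
        linear_combination -e
      rw [e2]
      exact dvd_sub (h.mul_left d) dvd_rfl
  have h1 : (∑ i ∈ range m, (if (q : ℤ) ∣ ((d : ℤ) * i - d * j + r) then (1 : ℤ) else 0))
      = ∑ i ∈ range m, (if (q : ℤ) ∣ ((i : ℤ) - ((j : ℤ) - s)) then (1 : ℤ) else 0) :=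
    Finset.sum_congr rfl (fun i _ => by rw [if_congr (key i) rfl rfl])
  rw [h1, Finset.sum_boole]
  have h2 := aux_count (q : ℤ) (by exact_mod_cast hq) ((j : ℤ) - s) m
  rw [h2]
  rw [show ((m : ℤ) - 1 - ((j : ℤ) - s)) = (m : ℤ) - 1 - j + s from by ring,
    show (-1 - ((j : ℤ) - s)) = -1 - (j : ℤ) + s from by ring]

lemma aux_floor_div (a q : ℕ) : ⌊(a : ℚ) / (q : ℚ)⌋ = ((a / q : ℕ) : ℤ) := by
  rw [show ((a : ℚ)) = ((a : ℤ) : ℚ) from by push_cast; ring,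
    Rat.floor_intCast_div_natCast, Int.natCast_div]
lemma aux_term (p : ℕ) (hp : p.Prime) (hp1 : p % 6 = 1) (n k j : ℕ) (hj : j ≤ k) (ℓ : ℕ) :
    (-⌊(j : ℚ) / (p : ℚ) ^ ℓ⌋ - ⌊((k : ℚ) - j) / (p : ℚ) ^ ℓ⌋
      + ⌊((n : ℚ) + k - j + ((p : ℚ) ^ ℓ + 5) / 6) / (p : ℚ) ^ ℓ⌋
      - ⌊(-(j : ℚ) + ((p : ℚ) ^ ℓ - 1) / 6) / (p : ℚ) ^ ℓ⌋
      - ⌊((k : ℚ) - j + ((p : ℚ) ^ ℓ + 2) / 3) / (p : ℚ) ^ ℓ⌋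
      + ⌊(-(j : ℚ) + ((p : ℚ) ^ ℓ - 1) / 3) / (p : ℚ) ^ ℓ⌋)
    = -((j / p ^ ℓ : ℕ) : ℤ) - (((k - j) / p ^ ℓ : ℕ) : ℤ)
      + (∑ i ∈ range (n + k + 1),
          (if ((p ^ ℓ : ℕ) : ℤ) ∣ (6 * (i : ℤ) - 6 * j + 5) then (1 : ℤ) else 0))
      - (∑ i ∈ range (k + 1),
          (if ((p ^ ℓ : ℕ) : ℤ) ∣ (3 * (i : ℤ) - 3 * j + 2) then (1 : ℤ) else 0)) := by
  have hp7 : 7 ≤ p := by have := hp.two_le; omega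
  set q := p ^ ℓ with hqdef
  have hq0 : 0 < q := pow_pos hp.pos ℓ
  have hq1 : q % 6 = 1 := by
    rw [hqdef, Nat.pow_mod, hp1, one_pow]
    norm_num
  have h6s : 6 * ((q + 5) / 6) = q + 5 := by omega
  have h3t : 3 * ((q + 2) / 3) = q + 2 := by omega
  set s := (q + 5) / 6 with hsdef
  set t := (q + 2) / 3 with htdef
  have hpd6 : ¬ p ∣ 6 := fun h => by have := Nat.le_of_dvd (by norm_num) h; omega
  have hpd3 : ¬ p ∣ 3 := fun h => by have := Nat.le_of_dvd (by norm_num) h; omega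
  have hco6 : IsCoprime (q : ℤ) ((6 : ℕ) : ℤ) :=
    Nat.isCoprime_iff_coprime.mpr (Nat.Coprime.pow_left ℓ (hp.coprime_iff_not_dvd.mpr hpd6))
  have hco3 : IsCoprime (q : ℤ) ((3 : ℕ) : ℤ) :=
    Nat.isCoprime_iff_coprime.mpr (Nat.Coprime.pow_left ℓ (hp.coprime_iff_not_dvd.mpr hpd3))
  have hcast : ((p : ℚ)) ^ ℓ = ((q : ℕ) : ℚ) := by rw [hqdef]; push_cast; ring
  have h6sQ : (6 : ℚ) * s = q + 5 := by exact_mod_cast congrArg (Nat.cast : ℕ → ℚ) h6s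
  have h3tQ : (3 : ℚ) * t = q + 2 := by exact_mod_cast congrArg (Nat.cast : ℕ → ℚ) h3t
  rw [hcast]
  -- floor rewrites
  have f1 : ⌊(j : ℚ) / ((q : ℕ) : ℚ)⌋ = ((j / q : ℕ) : ℤ) := aux_floor_div j q
  have f2 : ⌊((k : ℚ) - j) / ((q : ℕ) : ℚ)⌋ = (((k - j) / q : ℕ) : ℤ) := by
    rw [show ((k : ℚ) - j) = (((k - j : ℕ)) : ℚ) from by push_cast [hj]; ring]
    exact aux_floor_div (k - j) q
  have f3 : ⌊((n : ℚ) + k - j + (((q : ℕ) : ℚ) + 5) / 6) / ((q : ℕ) : ℚ)⌋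
      = ((n : ℤ) + k - j + s) / q := by
    rw [show ((n : ℚ) + k - j + (((q : ℕ) : ℚ) + 5) / 6)
        = (((n : ℤ) + k - j + s : ℤ) : ℚ) from by push_cast; linarith [h6sQ]]
    exact Rat.floor_intCast_div_natCast _ _
  have f4 : ⌊(-(j : ℚ) + (((q : ℕ) : ℚ) - 1) / 6) / ((q : ℕ) : ℚ)⌋
      = (-1 - (j : ℤ) + s) / q := by
    rw [show (-(j : ℚ) + (((q : ℕ) : ℚ) - 1) / 6)
        = ((-1 - (j : ℤ) + s : ℤ) : ℚ) from by push_cast; linarith [h6sQ]]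
    exact Rat.floor_intCast_div_natCast _ _
  have f5 : ⌊((k : ℚ) - j + (((q : ℕ) : ℚ) + 2) / 3) / ((q : ℕ) : ℚ)⌋
      = ((k : ℤ) - j + t) / q := by
    rw [show ((k : ℚ) - j + (((q : ℕ) : ℚ) + 2) / 3)
        = (((k : ℤ) - j + t : ℤ) : ℚ) from by push_cast; linarith [h3tQ]]
    exact Rat.floor_intCast_div_natCast _ _
  have f6 : ⌊(-(j : ℚ) + (((q : ℕ) : ℚ) - 1) / 3) / ((q : ℕ) : ℚ)⌋
      = (-1 - (j : ℤ) + t) / q := by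
    rw [show (-(j : ℚ) + (((q : ℕ) : ℚ) - 1) / 3)
        = ((-1 - (j : ℤ) + t : ℤ) : ℚ) from by push_cast; linarith [h3tQ]]
    exact Rat.floor_intCast_div_natCast _ _
  rw [f1, f2, f3, f4, f5, f6]
  have c6 := aux_count_mod q hq0 6 5 hco6 j s (n + k + 1) h6s
  have c3 := aux_count_mod q hq0 3 2 hco3 j t (k + 1) h3t
  rw [show (((n + k + 1 : ℕ) : ℤ) - 1 - j + s) = (n : ℤ) + k - j + s from by push_cast; ring] at c6
  rw [show (((k + 1 : ℕ) : ℤ) - 1 - j + t) = (k : ℤ) - j + t from by push_cast; ring] at c3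
  push_cast at c6 c3
  rw [c6, c3]
  ring

/-- Legendre-type formula. For a prime p ≡ 1 (mod 6) and j ≤ k,
the p-adic valuation of (1/k!)·C(k,j)·(5/6 − j)_{n+k+1}/(2/3 − j)_{k+1} equals
∑_{ℓ≥1} (−⌊j/p^ℓ⌋ − ⌊(k−j)/p^ℓ⌋ + ⌊(n+k−j+(p^ℓ+5)/6)/p^ℓ⌋ − ⌊(−j+(p^ℓ−1)/6)/p^ℓ⌋
  − ⌊(k−j+(p^ℓ+2)/3)/p^ℓ⌋ + ⌊(−j+(p^ℓ−1)/3)/p^ℓ⌋);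
the terms vanish for large ℓ, so the sum is formalized via its (eventually
constant) partial sums. -/
theorem statement17 (p : ℕ) (hp : p.Prime) (hp1 : p % 6 = 1)
    (n k j : ℕ) (hj : j ≤ k) :
    ∃ L : ℕ, ∀ M : ℕ, L ≤ M →
      padicValRat p
          ((1 / (k.factorial : ℚ)) * (k.choose j : ℚ) *
            (ascPochhammer ℚ (n + k + 1)).eval (5 / 6 - (j : ℚ)) /
            (ascPochhammer ℚ (k + 1)).eval (2 / 3 - (j : ℚ)))
        = ∑ ℓ ∈ Icc 1 M,
            (-⌊(j : ℚ) / (p : ℚ) ^ ℓ⌋ - ⌊((k : ℚ) - j) / (p : ℚ) ^ ℓ⌋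
              + ⌊((n : ℚ) + k - j + ((p : ℚ) ^ ℓ + 5) / 6) / (p : ℚ) ^ ℓ⌋
              - ⌊(-(j : ℚ) + ((p : ℚ) ^ ℓ - 1) / 6) / (p : ℚ) ^ ℓ⌋
              - ⌊((k : ℚ) - j + ((p : ℚ) ^ ℓ + 2) / 3) / (p : ℚ) ^ ℓ⌋
              + ⌊(-(j : ℚ) + ((p : ℚ) ^ ℓ - 1) / 3) / (p : ℚ) ^ ℓ⌋) := by
  haveI : Fact p.Prime := ⟨hp⟩
  have hp7 : 7 ≤ p := by have := hp.two_le; omega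
  have hpd6 : ¬ p ∣ 6 := fun h => by have := Nat.le_of_dvd (by norm_num) h; omega
  have hpd3 : ¬ p ∣ 3 := fun h => by have := Nat.le_of_dvd (by norm_num) h; omega
  have hAne : ∀ i : ℕ, (6 * (i : ℤ) - 6 * j + 5) ≠ 0 := fun i => by omega
  have hBne : ∀ i : ℕ, (3 * (i : ℤ) - 3 * j + 2) ≠ 0 := fun i => by omega
  have hv6 : padicValRat p ((6 : ℚ)) = 0 := by
    rw [show (6 : ℚ) = ((6 : ℕ) : ℚ) from by norm_num, padicValRat.of_nat,
      padicValNat.eq_zero_of_not_dvd hpd6]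
    norm_num
  have hv3 : padicValRat p ((3 : ℚ)) = 0 := by
    rw [show (3 : ℚ) = ((3 : ℕ) : ℚ) from by norm_num, padicValRat.of_nat,
      padicValNat.eq_zero_of_not_dvd hpd3]
    norm_num
  have hfacA : ∀ i : ℕ, (5 / 6 - (j : ℚ) + i) = ((6 * (i : ℤ) - 6 * j + 5 : ℤ) : ℚ) / 6 :=
    fun i => by push_cast; ring
  have hfacB : ∀ i : ℕ, (2 / 3 - (j : ℚ) + i) = ((3 * (i : ℤ) - 3 * j + 2 : ℤ) : ℚ) / 3 :=
    fun i => by push_cast; ring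
  have hfAne : ∀ i : ℕ, (5 / 6 - (j : ℚ) + (i : ℚ)) ≠ 0 := fun i => by
    rw [hfacA i]
    exact div_ne_zero (Int.cast_ne_zero.mpr (hAne i)) (by norm_num)
  have hfBne : ∀ i : ℕ, (2 / 3 - (j : ℚ) + (i : ℚ)) ≠ 0 := fun i => by
    rw [hfacB i]
    exact div_ne_zero (Int.cast_ne_zero.mpr (hBne i)) (by norm_num)
  have hvA : ∀ i : ℕ, padicValRat p (5 / 6 - (j : ℚ) + i)
      = (padicValInt p (6 * (i : ℤ) - 6 * j + 5) : ℤ) := fun i => by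
    rw [hfacA i, padicValRat.div (Int.cast_ne_zero.mpr (hAne i)) (by norm_num),
      padicValRat.of_int, hv6, sub_zero]
  have hvB : ∀ i : ℕ, padicValRat p (2 / 3 - (j : ℚ) + i)
      = (padicValInt p (3 * (i : ℤ) - 3 * j + 2) : ℤ) := fun i => by
    rw [hfacB i, padicValRat.div (Int.cast_ne_zero.mpr (hBne i)) (by norm_num),
      padicValRat.of_int, hv3, sub_zero]
  have hP1 : (∏ i ∈ range (n + k + 1), (5 / 6 - (j : ℚ) + i)) ≠ 0 :=
    prod_ne_zero_iff.mpr (fun i _ => hfAne i)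
  have hP2 : (∏ i ∈ range (k + 1), (2 / 3 - (j : ℚ) + i)) ≠ 0 :=
    prod_ne_zero_iff.mpr (fun i _ => hfBne i)
  have hDnat : (j.factorial * (k - j).factorial : ℕ) ≠ 0 :=
    Nat.mul_ne_zero j.factorial_ne_zero (k - j).factorial_ne_zero
  have hDne : (((j.factorial * (k - j).factorial : ℕ) : ℚ)) ≠ 0 := Nat.cast_ne_zero.mpr hDnat
  have hD : (1 / (k.factorial : ℚ)) * (k.choose j : ℚ)
      = (((j.factorial * (k - j).factorial : ℕ) : ℚ))⁻¹ := by
    rw [Nat.cast_choose ℚ hj]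
    have h1 : ((k.factorial : ℚ)) ≠ 0 := Nat.cast_ne_zero.mpr k.factorial_ne_zero
    have h2 : ((j.factorial : ℚ)) ≠ 0 := Nat.cast_ne_zero.mpr j.factorial_ne_zero
    have h3 : (((k - j).factorial : ℚ)) ≠ 0 := Nat.cast_ne_zero.mpr (k - j).factorial_ne_zero
    push_cast
    field_simp
  have hLHS : padicValRat p
          ((1 / (k.factorial : ℚ)) * (k.choose j : ℚ) *
            (ascPochhammer ℚ (n + k + 1)).eval (5 / 6 - (j : ℚ)) /
            (ascPochhammer ℚ (k + 1)).eval (2 / 3 - (j : ℚ)))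
      = -(padicValNat p j.factorial : ℤ) - (padicValNat p (k - j).factorial : ℤ)
        + ∑ i ∈ range (n + k + 1), (padicValInt p (6 * (i : ℤ) - 6 * j + 5) : ℤ)
        - ∑ i ∈ range (k + 1), (padicValInt p (3 * (i : ℤ) - 3 * j + 2) : ℤ) := by
    rw [aux_asc_prod, aux_asc_prod, hD,
      padicValRat.div (mul_ne_zero (inv_ne_zero hDne) hP1) hP2,
      padicValRat.mul (inv_ne_zero hDne) hP1, padicValRat.inv,
      padicValRat.of_nat, aux_val_prod hp _ _ (fun i _ => hfAne i),
      aux_val_prod hp _ _ (fun i _ => hfBne i),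
      Finset.sum_congr rfl (fun i _ => hvA i), Finset.sum_congr rfl (fun i _ => hvB i),
      padicValNat.mul j.factorial_ne_zero (k - j).factorial_ne_zero]
    push_cast
    ring
  refine ⟨6 * n + 12 * k + 12, fun M hM => ?_⟩
  rw [hLHS, Finset.sum_congr rfl (fun ℓ _ => aux_term p hp hp1 n k j hj ℓ)]
  have leg1 : padicValNat p j.factorial = ∑ ℓ ∈ Icc 1 M, j / p ^ ℓ := by
    rw [← Finset.Ico_add_one_right_eq_Icc]
    exact padicValNat_factorial (lt_of_le_of_lt (Nat.log_le_self p j) (by omega))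
  have leg2 : padicValNat p (k - j).factorial = ∑ ℓ ∈ Icc 1 M, (k - j) / p ^ ℓ := by
    rw [← Finset.Ico_add_one_right_eq_Icc]
    exact padicValNat_factorial (lt_of_le_of_lt (Nat.log_le_self p (k - j)) (by omega))
  have sw6 : ∑ ℓ ∈ Icc 1 M, ∑ i ∈ range (n + k + 1),
        (if ((p ^ ℓ : ℕ) : ℤ) ∣ (6 * (i : ℤ) - 6 * j + 5) then (1 : ℤ) else 0)
      = ∑ i ∈ range (n + k + 1), (padicValInt p (6 * (i : ℤ) - 6 * j + 5) : ℤ) := by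
    rw [Finset.sum_comm]
    refine Finset.sum_congr rfl (fun i hi => ?_)
    rw [Finset.mem_range] at hi
    have hb : padicValInt p (6 * (i : ℤ) - 6 * j + 5) ≤ M := by
      have h1 := aux_val_le hp (hAne i)
      have h2 : (6 * (i : ℤ) - 6 * j + 5).natAbs ≤ 6 * i + 6 * j + 5 := by omega
      omega
    simp only [Nat.cast_pow]
    exact (aux_val_sum hp (hAne i) hb).symm
  have sw3 : ∑ ℓ ∈ Icc 1 M, ∑ i ∈ range (k + 1),
        (if ((p ^ ℓ : ℕ) : ℤ) ∣ (3 * (i : ℤ) - 3 * j + 2) then (1 : ℤ) else 0)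
      = ∑ i ∈ range (k + 1), (padicValInt p (3 * (i : ℤ) - 3 * j + 2) : ℤ) := by
    rw [Finset.sum_comm]
    refine Finset.sum_congr rfl (fun i hi => ?_)
    rw [Finset.mem_range] at hi
    have hb : padicValInt p (3 * (i : ℤ) - 3 * j + 2) ≤ M := by
      have h1 := aux_val_le hp (hBne i)
      have h2 : (3 * (i : ℤ) - 3 * j + 2).natAbs ≤ 3 * i + 3 * j + 2 := by omega
      omega
    simp only [Nat.cast_pow]
    exact (aux_val_sum hp (hBne i) hb).symm
  have cast1 : ∑ ℓ ∈ Icc 1 M, ((j / p ^ ℓ : ℕ) : ℤ) = (padicValNat p j.factorial : ℤ) := by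
    rw [leg1]; push_cast; rfl
  have cast2 : ∑ ℓ ∈ Icc 1 M, (((k - j) / p ^ ℓ : ℕ) : ℤ)
      = (padicValNat p (k - j).factorial : ℤ) := by
    rw [leg2]; push_cast; rfl
  simp only [Finset.sum_add_distrib, Finset.sum_sub_distrib, Finset.sum_neg_distrib]
  rw [sw6, sw3, cast1, cast2]
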